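/- Let λ > 0, J₁ > 0, v₀ ∈ ℝ, and define g(ρ) = (1/π)·∫_{−π/2}^{π/2} S(λ·(v₀ + √J₁·ρ·cos(2x)))·cos(2x) dx. Then g is differentiable at ρ = 0 with g′(0) = (λ·√J₁/2)·S′(λ·v₀); equivalently, √J₁·∂_ρ B₁(v₀, ρ)|_{ρ=0} = λ·(J₁/2)·S′(λ·v₀), where B₁(v₀, ρ) = g(ρ). This quantity equal to 1 is the condition for a pitchfork bifurcation of the tuned stationary solutions. -/

import Mathlib

open Real

/-- The logistic sigmoid. -/
noncomputable def S (x : ℝ) : ℝ := 1 / (1 + Real.exp (-x))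

lemma one_add_exp_pos (x : ℝ) : 0 < 1 + Real.exp (-x) := by positivity

lemma hasDerivAt_S (x : ℝ) :
    HasDerivAt S (Real.exp (-x) / (1 + Real.exp (-x)) ^ 2) x := by
  have h1 : HasDerivAt (fun y : ℝ => 1 + Real.exp (-y)) (-Real.exp (-x)) x := by
    simpa using (((Real.hasDerivAt_exp (-x)).comp x ((hasDerivAt_id x).neg)).const_add 1)
  have h2 := h1.inv (ne_of_gt (one_add_exp_pos x))
  have : HasDerivAt (fun y : ℝ => (1 + Real.exp (-y))⁻¹)
      (Real.exp (-x) / (1 + Real.exp (-x)) ^ 2) x := by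
    exact h2.congr_deriv (by ring)
  have hSe : S = fun y => (1 + Real.exp (-y))⁻¹ := by funext y; simp [S]
  rw [hSe]; exact this

lemma S_deriv_bound (x : ℝ) : Real.exp (-x) / (1 + Real.exp (-x)) ^ 2 ≤ 1 := by
  rw [div_le_one (by positivity)]
  nlinarith [Real.exp_pos (-x), sq_nonneg (1 + Real.exp (-x))]

lemma continuous_S : Continuous S := by
  apply Continuous.div continuous_const
  · exact continuous_const.add (Real.continuous_exp.comp continuous_neg)
  · intro x; exact ne_of_gt (one_add_exp_pos x)

lemma integral_cos_sq_two :
    (∫ x in (-(π/2))..(π/2), Real.cos (2 * x) ^ 2) = π / 2 := by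
  have h : ∀ x ∈ Set.uIcc (-(π/2)) (π/2), HasDerivAt (fun y : ℝ => y / 2 + Real.sin (4 * y) / 8)
      (Real.cos (2 * x) ^ 2) x := by
    intro x _
    have h1 : HasDerivAt (fun y : ℝ => y / 2) (1 / 2) x := by
      simpa using (hasDerivAt_id x).div_const 2
    have h2 : HasDerivAt (fun y : ℝ => Real.sin (4 * y) / 8) (Real.cos (4 * x) / 2) x := by
      have := ((Real.hasDerivAt_sin (4 * x)).comp x
        ((hasDerivAt_id x).const_mul 4)).div_const 8
      exact this.congr_deriv (by ring)
    have := h1.add h2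
    refine this.congr_deriv ?_
    have := Real.cos_sq (2 * x)
    rw [this]; ring_nf
  have hint : IntervalIntegrable (fun x => Real.cos (2 * x) ^ 2) MeasureTheory.volume
      (-(π/2)) (π/2) :=
    (Continuous.pow (Real.continuous_cos.comp (continuous_const.mul continuous_id)) 2).intervalIntegrable _ _
  rw [intervalIntegral.integral_eq_sub_of_hasDerivAt h hint]
  have h4 : (4 : ℝ) * (π / 2) = 2 * π := by ring
  have h4' : (4 : ℝ) * (-(π / 2)) = -(2 * π) := by ring
  simp [h4, h4', Real.sin_two_pi]
  ring

/-- the derivative at `ρ = 0` of `ρ ↦ B₁(v₀, ρ)` equals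
`(λ·√J₁/2)·S′(λ·v₀)`; setting `√J₁` times it equal to `1` is the pitchfork condition. -/
theorem stmt_12 (lam J₁ v₀ : ℝ) (hlam : 0 < lam) (hJ₁ : 0 < J₁)
    (g : ℝ → ℝ)
    (hg : ∀ ρ, g ρ = (1 / π) * ∫ x in (-(π/2))..(π/2),
      S (lam * (v₀ + Real.sqrt J₁ * ρ * Real.cos (2 * x))) * Real.cos (2 * x)) :
    HasDerivAt g (lam * Real.sqrt J₁ / 2 * deriv S (lam * v₀)) 0 ∧
    Real.sqrt J₁ * deriv g 0 = lam * (J₁ / 2) * deriv S (lam * v₀) := by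
  set sJ := Real.sqrt J₁ with hsJ
  have hsJ0 : 0 < sJ := Real.sqrt_pos.mpr hJ₁
  set F : ℝ → ℝ → ℝ := fun ρ x =>
    S (lam * (v₀ + sJ * ρ * Real.cos (2 * x))) * Real.cos (2 * x) with hF
  set F' : ℝ → ℝ → ℝ := fun ρ x =>
    (Real.exp (-(lam * (v₀ + sJ * ρ * Real.cos (2 * x)))) /
      (1 + Real.exp (-(lam * (v₀ + sJ * ρ * Real.cos (2 * x))))) ^ 2) *
      (lam * sJ * Real.cos (2 * x)) * Real.cos (2 * x) with hF'
  have hcos : Continuous fun x : ℝ => Real.cos (2 * x) :=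
    Real.continuous_cos.comp (continuous_const.mul continuous_id)
  have hFc : ∀ ρ, Continuous (F ρ) := by
    intro ρ
    exact ((continuous_S.comp ((continuous_const.mul
      (continuous_const.add (continuous_const.mul hcos))))).mul hcos)
  have hF'c : Continuous (F' 0) := by
    have harg : Continuous fun x : ℝ => lam * (v₀ + sJ * (0:ℝ) * Real.cos (2 * x)) :=
      continuous_const.mul (continuous_const.add (continuous_const.mul hcos))
    apply Continuous.mul
    apply Continuous.mul
    · apply Continuous.div
      · exact Real.continuous_exp.comp harg.neg
      · exact (continuous_const.add (Real.continuous_exp.comp harg.neg)).pow 2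
      · intro x; exact ne_of_gt (by positivity)
    · exact continuous_const.mul hcos
    · exact hcos
  have key := intervalIntegral.hasDerivAt_integral_of_dominated_loc_of_deriv_le
    (F := F) (F' := F') (x₀ := (0:ℝ)) (a := -(π/2)) (b := π/2)
    (μ := MeasureTheory.volume) (bound := fun _ => lam * sJ)
    (s := Metric.ball 0 1) (Metric.ball_mem_nhds 0 one_pos)
    (Filter.Eventually.of_forall fun ρ => (hFc ρ).aestronglyMeasurable)
    ((hFc 0).intervalIntegrable _ _)
    hF'c.aestronglyMeasurable
    (Filter.Eventually.of_forall ?_)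
    (intervalIntegrable_const)
    (Filter.Eventually.of_forall ?_)
  · -- main conclusion
    obtain ⟨-, hd⟩ := key
    -- compute the integral of F' 0
    have hint : (∫ x in (-(π/2))..(π/2), F' 0 x) =
        (Real.exp (-(lam * v₀)) / (1 + Real.exp (-(lam * v₀))) ^ 2) * (lam * sJ) * (π / 2) := by
      have : ∀ x : ℝ, F' 0 x =
          ((Real.exp (-(lam * v₀)) / (1 + Real.exp (-(lam * v₀))) ^ 2) * (lam * sJ)) *
            (Real.cos (2 * x) ^ 2) := by
        intro x; simp only [hF']; ring_nf
      simp_rw [this]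
      rw [intervalIntegral.integral_const_mul, integral_cos_sq_two]
    have hderivS : deriv S (lam * v₀) =
        Real.exp (-(lam * v₀)) / (1 + Real.exp (-(lam * v₀))) ^ 2 :=
      (hasDerivAt_S (lam * v₀)).deriv
    have hgeq : g = fun ρ => (1 / π) * ∫ x in (-(π/2))..(π/2), F ρ x := funext hg
    have hπ : (0:ℝ) < π := Real.pi_pos
    have hmain : HasDerivAt g (lam * sJ / 2 * deriv S (lam * v₀)) 0 := by
      rw [hgeq]
      have := hd.const_mul (1 / π)
      refine this.congr_deriv ?_
      rw [hint, hderivS]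
      field_simp
    refine ⟨hmain, ?_⟩
    rw [hmain.deriv]
    have : sJ * sJ = J₁ := Real.mul_self_sqrt hJ₁.le
    linear_combination (lam / 2 * deriv S (lam * v₀)) * this
  · -- bound
    intro x _ ρ _
    simp only [hF', Real.norm_eq_abs]
    have h1 : |Real.exp (-(lam * (v₀ + sJ * ρ * Real.cos (2 * x)))) /
        (1 + Real.exp (-(lam * (v₀ + sJ * ρ * Real.cos (2 * x))))) ^ 2| ≤ 1 := by
      rw [abs_of_nonneg (by positivity)]
      exact S_deriv_bound _
    have h2 : |Real.cos (2 * x)| ≤ 1 := Real.abs_cos_le_one _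
    calc |Real.exp (-(lam * (v₀ + sJ * ρ * Real.cos (2 * x)))) /
          (1 + Real.exp (-(lam * (v₀ + sJ * ρ * Real.cos (2 * x))))) ^ 2 *
          (lam * sJ * Real.cos (2 * x)) * Real.cos (2 * x)|
        = |Real.exp (-(lam * (v₀ + sJ * ρ * Real.cos (2 * x)))) /
          (1 + Real.exp (-(lam * (v₀ + sJ * ρ * Real.cos (2 * x))))) ^ 2| *
          ((lam * sJ) * |Real.cos (2 * x)|) * |Real.cos (2 * x)| := by
          rw [abs_mul, abs_mul, abs_mul, abs_mul,
            abs_of_pos hlam, abs_of_pos hsJ0]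
      _ ≤ 1 * ((lam * sJ) * 1) * 1 := by
          apply mul_le_mul _ h2 (abs_nonneg _) (by positivity)
          apply mul_le_mul h1 _ (by positivity) zero_le_one
          exact mul_le_mul_of_nonneg_left h2 (by positivity)
      _ = lam * sJ := by ring
  · -- differentiability
    intro x _ ρ _
    have harg : HasDerivAt (fun r : ℝ => lam * (v₀ + sJ * r * Real.cos (2 * x)))
        (lam * (sJ * Real.cos (2 * x))) ρ := by
      have : HasDerivAt (fun r : ℝ => v₀ + sJ * r * Real.cos (2 * x))
          (sJ * Real.cos (2 * x)) ρ := by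
        have := ((hasDerivAt_id ρ).const_mul sJ).mul_const (Real.cos (2 * x))
        simpa [mul_comm, mul_assoc, mul_left_comm] using this.const_add v₀
      simpa using this.const_mul lam
    have hcomp := (hasDerivAt_S (lam * (v₀ + sJ * ρ * Real.cos (2 * x)))).comp ρ harg
    have := hcomp.mul_const (Real.cos (2 * x))
    refine this.congr_deriv ?_
    simp only [hF']
    ring
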